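/- Let X be a real random variable with 𝔼X = 0, and suppose X is bounded: |X| ≤ a almost surely, with 𝔼X² > 0. Define the Sakhanenko parameter λ(X) = sup{λ > 0 : λ·𝔼[|X|³ e^{λ|X|}] ≤ 𝔼X²}. Then √(Var X) ≤ λ(X)⁻¹ ≤ 2a. -/

import Mathlib

open MeasureTheory

/-- The Sakhanenko parameter `λ(X) = sup {λ > 0 : λ 𝔼[|X|³ e^{λ|X|}] ≤ 𝔼 X²}`. -/
noncomputable def sakhanenkoParam {Ω : Type*} [MeasurableSpace Ω] (μ : Measure Ω)
    (X : Ω → ℝ) : ℝ :=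
  sSup {l : ℝ | 0 < l ∧
    l * ∫ ω, |X ω| ^ 3 * Real.exp (l * |X ω|) ∂μ ≤ ∫ ω, (X ω) ^ 2 ∂μ}

/-- if `X` is centered, `|X| ≤ a` a.s. with `a > 0` and `𝔼X² > 0`, then
`√(Var X) ≤ λ(X)⁻¹ ≤ 2a` for the Sakhanenko parameter `λ(X)`. -/
theorem stmt_5 (Ω : Type*) [MeasurableSpace Ω] (μ : Measure Ω) [IsProbabilityMeasure μ]
    (X : Ω → ℝ) (a : ℝ) (ha : 0 < a) (hmeas : Measurable X)
    (hbdd : ∀ᵐ ω ∂μ, |X ω| ≤ a) (hmean : (∫ ω, X ω ∂μ) = 0)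
    (hvar : 0 < ∫ ω, (X ω) ^ 2 ∂μ) :
    Real.sqrt (∫ ω, (X ω) ^ 2 ∂μ) ≤ (sakhanenkoParam μ X)⁻¹ ∧
      (sakhanenkoParam μ X)⁻¹ ≤ 2 * a := by
  set V : ℝ := ∫ ω, (X ω) ^ 2 ∂μ with hV
  -- generic integrability from a.e. bound
  have hint : ∀ (f : Ω → ℝ) (C : ℝ), Measurable f → (∀ᵐ ω ∂μ, |f ω| ≤ C) →
      Integrable f μ := by
    intro f C hf hb
    exact (integrable_const C).mono' hf.aestronglyMeasurable
      (by simpa [Real.norm_eq_abs] using hb)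
  have iX2 : Integrable (fun ω => (X ω) ^ 2) μ := by
    refine hint _ (a ^ 2) (hmeas.pow_const 2) ?_
    filter_upwards [hbdd] with ω h
    rw [abs_pow]
    exact pow_le_pow_left₀ (abs_nonneg _) h 2
  have iX4 : Integrable (fun ω => (X ω) ^ 4) μ := by
    refine hint _ (a ^ 4) (hmeas.pow_const 4) ?_
    filter_upwards [hbdd] with ω h
    rw [abs_pow]
    exact pow_le_pow_left₀ (abs_nonneg _) h 4
  have iE : ∀ l : ℝ, 0 ≤ l →
      Integrable (fun ω => |X ω| ^ 3 * Real.exp (l * |X ω|)) μ := by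
    intro l hl
    refine hint _ (a ^ 3 * Real.exp (l * a)) ((hmeas.abs.pow_const 3).mul
      ((measurable_const.mul hmeas.abs).exp)) ?_
    filter_upwards [hbdd] with ω h
    rw [abs_mul, abs_pow, abs_abs, Real.abs_exp]
    exact mul_le_mul (pow_le_pow_left₀ (abs_nonneg _) h 3)
      (Real.exp_le_exp.2 (mul_le_mul_of_nonneg_left h hl))
      (Real.exp_pos _).le (by positivity)
  -- Cauchy–Schwarz: V² ≤ ∫ X⁴
  have hCS : V ^ 2 ≤ ∫ ω, (X ω) ^ 4 ∂μ := by
    have h0 : 0 ≤ ∫ ω, ((X ω) ^ 2 - V) ^ 2 ∂μ :=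
      integral_nonneg fun ω => sq_nonneg _
    have hexp : ∫ ω, ((X ω) ^ 2 - V) ^ 2 ∂μ
        = (∫ ω, (X ω) ^ 4 ∂μ) - 2 * V * V + V ^ 2 := by
      have : ∀ ω, ((X ω) ^ 2 - V) ^ 2 = (X ω) ^ 4 - 2 * V * (X ω) ^ 2 + V ^ 2 := by
        intro ω; ring
      simp_rw [this, sub_add_eq_add_sub]
      have iA : Integrable (fun ω => X ω ^ 4 + V ^ 2) μ := iX4.add (integrable_const _)
      have iB : Integrable (fun ω => 2 * V * X ω ^ 2) μ := iX2.const_mul _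
      rw [integral_sub iA iB, integral_add iX4 (integrable_const _),
        integral_const_mul, integral_const]
      simp [hV]
    nlinarith [h0, hexp]
  -- `1/(2a)` belongs to the set
  have hexph : Real.exp (2 : ℝ)⁻¹ ≤ 2 := by
    have hsq : Real.exp (2 : ℝ)⁻¹ ^ 2 = Real.exp 1 := by
      rw [sq, ← Real.exp_add]; norm_num
    nlinarith [Real.exp_one_lt_d9, Real.exp_pos ((2:ℝ)⁻¹)]
  have hmem : (1 / (2 * a)) ∈ {l : ℝ | 0 < l ∧
      l * ∫ ω, |X ω| ^ 3 * Real.exp (l * |X ω|) ∂μ ≤ V} := by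
    refine ⟨by positivity, ?_⟩
    have hle : ∫ ω, |X ω| ^ 3 * Real.exp ((1 / (2 * a)) * |X ω|) ∂μ
        ≤ ∫ ω, (2 * a) * (X ω) ^ 2 ∂μ := by
      refine integral_mono_ae (iE _ (by positivity)) (iX2.const_mul _) ?_
      filter_upwards [hbdd] with ω h
      have h1 : |X ω| ^ 3 ≤ a * (X ω) ^ 2 := by
        have : |X ω| ^ 3 = |X ω| * (X ω) ^ 2 := by rw [← sq_abs]; ring
        rw [this]
        exact mul_le_mul_of_nonneg_right h (sq_nonneg _)
      have h2 : Real.exp ((1 / (2 * a)) * |X ω|) ≤ 2 := by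
        refine le_trans (Real.exp_le_exp.2 ?_) hexph
        rw [div_mul_eq_mul_div, one_mul, div_le_iff₀ (by positivity)]
        calc |X ω| ≤ a := h
          _ = (2:ℝ)⁻¹ * (2 * a) := by ring
      calc |X ω| ^ 3 * Real.exp ((1 / (2 * a)) * |X ω|)
          ≤ (a * (X ω) ^ 2) * 2 := by
            exact mul_le_mul h1 h2 (Real.exp_pos _).le (by positivity)
        _ = (2 * a) * (X ω) ^ 2 := by ring
    calc (1 / (2 * a)) * ∫ ω, |X ω| ^ 3 * Real.exp ((1 / (2 * a)) * |X ω|) ∂μ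
        ≤ (1 / (2 * a)) * ∫ ω, (2 * a) * (X ω) ^ 2 ∂μ := by
          exact mul_le_mul_of_nonneg_left hle (by positivity)
      _ = V := by rw [integral_const_mul]; field_simp; exact hV.symm
  -- every element of the set is at most `(√V)⁻¹`
  have hsV : 0 < Real.sqrt V := Real.sqrt_pos.2 hvar
  have hub : ∀ l ∈ {l : ℝ | 0 < l ∧
      l * ∫ ω, |X ω| ^ 3 * Real.exp (l * |X ω|) ∂μ ≤ V}, l ≤ (Real.sqrt V)⁻¹ := by
    rintro l ⟨hl, hle⟩
    have hpt : ∀ ω, l * (X ω) ^ 4 ≤ |X ω| ^ 3 * Real.exp (l * |X ω|) := by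
      intro ω
      have h1 : l * |X ω| ≤ Real.exp (l * |X ω|) := by
        linarith [Real.add_one_le_exp (l * |X ω|)]
      have habs : |X ω| ^ 3 * (l * |X ω|) = l * (X ω) ^ 4 := by
        rw [show |X ω| ^ 3 * (l * |X ω|) = l * |X ω| ^ 4 by ring, ← abs_pow,
          abs_of_nonneg (by positivity : (0:ℝ) ≤ (X ω) ^ 4)]
      calc l * (X ω) ^ 4 = |X ω| ^ 3 * (l * |X ω|) := habs.symm
        _ ≤ |X ω| ^ 3 * Real.exp (l * |X ω|) :=
            mul_le_mul_of_nonneg_left h1 (by positivity)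
    have hI : l * ∫ ω, (X ω) ^ 4 ∂μ ≤ ∫ ω, |X ω| ^ 3 * Real.exp (l * |X ω|) ∂μ := by
      rw [← integral_const_mul]
      exact integral_mono (iX4.const_mul _) (iE l hl.le) hpt
    have key : l ^ 2 * V ^ 2 ≤ V := by
      have : l * (l * ∫ ω, (X ω) ^ 4 ∂μ) ≤ V :=
        le_trans (mul_le_mul_of_nonneg_left hI hl.le) hle
      nlinarith [hCS, hl, hl.le]
    have hlV : (l * Real.sqrt V) ^ 2 ≤ 1 := by
      have hs2 : Real.sqrt V ^ 2 = V := Real.sq_sqrt hvar.le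
      have : l ^ 2 * V ≤ 1 := by
        have hVpos := hvar
        nlinarith [key]
      calc (l * Real.sqrt V) ^ 2 = l ^ 2 * Real.sqrt V ^ 2 := by ring
        _ = l ^ 2 * V := by rw [hs2]
        _ ≤ 1 := this
    have : l * Real.sqrt V ≤ 1 := by
      nlinarith [mul_pos hl hsV]
    rw [← one_div, le_div_iff₀ hsV]
    exact this
  -- conclude
  have hbddS : BddAbove {l : ℝ | 0 < l ∧
      l * ∫ ω, |X ω| ^ 3 * Real.exp (l * |X ω|) ∂μ ≤ V} := ⟨(Real.sqrt V)⁻¹, hub⟩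
  have h1 : (1 / (2 * a)) ≤ sakhanenkoParam μ X := le_csSup hbddS hmem
  have h2 : sakhanenkoParam μ X ≤ (Real.sqrt V)⁻¹ := csSup_le ⟨_, hmem⟩ hub
  have hlam : 0 < sakhanenkoParam μ X := lt_of_lt_of_le (by positivity) h1
  constructor
  · calc Real.sqrt V = ((Real.sqrt V)⁻¹)⁻¹ := by rw [inv_inv]
      _ ≤ (sakhanenkoParam μ X)⁻¹ := inv_anti₀ hlam h2
  · calc (sakhanenkoParam μ X)⁻¹ ≤ (1 / (2 * a))⁻¹ :=
        inv_anti₀ (by positivity) h1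
      _ = 2 * a := by field_simp
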